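/- arXiv:1801.09401 — 9 statements merged into one kernel-verified Lean document; each statement's English description precedes it below -/
import Mathlib

section
/- Let e be a potential event and let γ, γ' : ℕ⁺ → ℕ⁺ be such that both (e, γ) and (e, γ') are actual events. Then |Φ(e)(γ(n)) − Φ(e)(γ'(n))| ≤ 1/n for every n ∈ ℕ⁺; in particular the sequences n ↦ Φ(e)(γ(n)) and n ↦ Φ(e)(γ'(n)) converge to the same real number. -/
/-- A potential event: a sequence of `0`s and `1`s indexed by positive naturals
(the value at `0` is irrelevant). -/
def IsPotential (e : ℕ → ℕ) : Prop := ∀ n, 1 ≤ n → e n ≤ 1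

/-- The frequency (rate of success) `Φ(e)(n) = (∑_{i=1}^n e(i)) / n`. -/
def freq (e : ℕ → ℕ) (n : ℕ) : ℚ := (∑ i ∈ Finset.Icc 1 n, (e i : ℚ)) / (n : ℚ)

/-- `(e, γ)` is an actual event: `γ : ℕ⁺ → ℕ⁺` is strictly increasing and
`|Φ(e)(γ(n)+i) − Φ(e)(γ(n)+j)| ≤ 1/n` for all `n ∈ ℕ⁺`, `i j ∈ ℕ`. -/
def IsActual (e : ℕ → ℕ) (γ : ℕ → ℕ) : Prop :=
  (∀ n, 1 ≤ n → 1 ≤ γ n) ∧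
  (∀ m n, 1 ≤ m → m < n → γ m < γ n) ∧
  (∀ n, 1 ≤ n → ∀ i j : ℕ, |freq e (γ n + i) - freq e (γ n + j)| ≤ 1 / (n : ℚ))

lemma key_aux (e γ : ℕ → ℕ) (h : IsActual e γ) :
    ∀ a b c : ℕ, 1 ≤ a → a ≤ b → a ≤ c →
      |freq e (γ b) - freq e (γ c)| ≤ 1 / (a : ℚ) := by
  have mono : ∀ a b, 1 ≤ a → a ≤ b → γ a ≤ γ b := by
    intro a b ha hab
    rcases eq_or_lt_of_le hab with rfl | hlt
    · exact le_rfl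
    · exact (h.2.1 a b ha hlt).le
  intro a b c ha hb hc
  obtain ⟨i, hi⟩ := Nat.le.dest (mono a b ha hb)
  obtain ⟨j, hj⟩ := Nat.le.dest (mono a c ha hc)
  rw [← hi, ← hj]
  exact h.2.2 a ha i j

theorem stmt1 (e γ γ' : ℕ → ℕ) (he : IsPotential e)
    (h : IsActual e γ) (h' : IsActual e γ') :
    (∀ n : ℕ, 1 ≤ n → |freq e (γ n) - freq e (γ' n)| ≤ 1 / (n : ℚ)) ∧
    ∃ p : ℝ,
      Filter.Tendsto (fun n => (freq e (γ n) : ℝ)) Filter.atTop (nhds p) ∧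
      Filter.Tendsto (fun n => (freq e (γ' n) : ℝ)) Filter.atTop (nhds p) := by
  have part1 : ∀ n : ℕ, 1 ≤ n → |freq e (γ n) - freq e (γ' n)| ≤ 1 / (n : ℚ) := by
    intro n hn
    rcases le_total (γ n) (γ' n) with hle | hle
    · obtain ⟨i, hi⟩ := Nat.le.dest hle
      have := h.2.2 n hn 0 i
      rw [add_zero, hi] at this
      exact this
    · obtain ⟨i, hi⟩ := Nat.le.dest hle
      have := h'.2.2 n hn i 0
      rw [add_zero, hi] at this
      exact this
  refine ⟨part1, ?_⟩
  -- The sequence is Cauchy.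
  set f : ℕ → ℝ := fun n => (freq e (γ n) : ℝ) with hf
  set g : ℕ → ℝ := fun n => (freq e (γ' n) : ℝ) with hg
  have hcauchy : CauchySeq (fun n => f (n + 1)) := by
    refine cauchySeq_of_le_tendsto_0 (fun N => 1 / ((N : ℝ) + 1)) ?_ ?_
    · intro n m N hn hm
      have hq := key_aux e γ h (N + 1) (n + 1) (m + 1) (Nat.le_add_left 1 N)
        (by omega) (by omega)
      have : |((freq e (γ (n+1)) : ℝ)) - ((freq e (γ (m+1)) : ℝ))| ≤ 1 / ((N : ℝ) + 1) := by
        have := (Rat.cast_le (K := ℝ)).2 hq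
        push_cast at this
        convert this using 2
      simpa [Real.dist_eq] using this
    · have : Filter.Tendsto (fun N : ℕ => ((N : ℝ) + 1)) Filter.atTop Filter.atTop :=
        Filter.tendsto_atTop_add_const_right _ 1 tendsto_natCast_atTop_atTop
      simpa [Pi.inv_def] using this.inv_tendsto_atTop
  obtain ⟨p, hp⟩ := cauchySeq_tendsto_of_complete hcauchy
  have hfp : Filter.Tendsto f Filter.atTop (nhds p) :=
    (Filter.tendsto_add_atTop_iff_nat 1).1 hp
  have hdiff : Filter.Tendsto (fun n => g n - f n) Filter.atTop (nhds 0) := by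
    apply squeeze_zero_norm' (a := fun n : ℕ => 1 / (n : ℝ))
    · filter_upwards [Filter.eventually_ge_atTop 1] with n hn
      have hq := part1 n hn
      have := (Rat.cast_le (K := ℝ)).2 hq
      push_cast at this
      simpa [hf, hg, Real.norm_eq_abs, abs_sub_comm] using this
    · simpa [one_div] using tendsto_one_div_atTop_nhds_zero_nat (𝕜 := ℝ)
  have hgp : Filter.Tendsto g Filter.atTop (nhds p) := by
    have := hfp.add hdiff
    simpa using this
  exact ⟨p, hfp, hgp⟩
end

section
/- Let (e, γ) and (e', γ') be actual events such that e(n)·e'(n) = 0 for every n ∈ ℕ⁺ (i.e. e ∧ e' = ⊥). Define η(n) := γ(2n) + γ'(2n) and let e ∨ e' be the potential event (e ∨ e')(n) = e(n) + e'(n) − e(n)e'(n). Then (e ∨ e', η) is an actual event. -/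
lemma freq_split (e e' : ℕ → ℕ) (hdisj : ∀ n, 1 ≤ n → e n * e' n = 0) (n : ℕ) :
    freq (fun k => e k + e' k - e k * e' k) n = freq e n + freq e' n := by
  unfold freq
  rw [← add_div]
  congr 1
  rw [← Finset.sum_add_distrib]
  apply Finset.sum_congr rfl
  intro i hi
  have h1 : 1 ≤ i := (Finset.mem_Icc.mp hi).1
  simp only [hdisj i h1, Nat.sub_zero, Nat.cast_add]

theorem stmt4 (e e' γ γ' : ℕ → ℕ) (he : IsPotential e) (he' : IsPotential e')
    (h : IsActual e γ) (h' : IsActual e' γ')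
    (hdisj : ∀ n, 1 ≤ n → e n * e' n = 0) :
    IsActual (fun n => e n + e' n - e n * e' n) (fun n => γ (2 * n) + γ' (2 * n)) := by
  obtain ⟨h1, h2, h3⟩ := h
  obtain ⟨h1', h2', h3'⟩ := h'
  refine ⟨?_, ?_, ?_⟩
  · intro n hn
    have := h1 (2 * n) (by omega)
    show 1 ≤ γ (2 * n) + γ' (2 * n)
    omega
  · intro m n hm hmn
    have := h2 (2 * m) (2 * n) (by omega) (by omega)
    have := h2' (2 * m) (2 * n) (by omega) (by omega)
    simp only
    omega
  · intro n hn i j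
    simp only [freq_split e e' hdisj]
    have hA := h3 (2 * n) (by omega) (γ' (2 * n) + i) (γ' (2 * n) + j)
    have hB := h3' (2 * n) (by omega) (γ (2 * n) + i) (γ (2 * n) + j)
    have key : ∀ k : ℕ, γ (2 * n) + γ' (2 * n) + k = γ (2 * n) + (γ' (2 * n) + k) := by omega
    have key' : ∀ k : ℕ, γ (2 * n) + γ' (2 * n) + k = γ' (2 * n) + (γ (2 * n) + k) := by omega
    set a := freq e (γ (2 * n) + (γ' (2 * n) + i)) with ha
    set b := freq e' (γ' (2 * n) + (γ (2 * n) + i)) with hb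
    set c := freq e (γ (2 * n) + (γ' (2 * n) + j)) with hc
    set d := freq e' (γ' (2 * n) + (γ (2 * n) + j)) with hd
    have e1 : freq e (γ (2 * n) + γ' (2 * n) + i) = a := by rw [key i]
    have e2 : freq e' (γ (2 * n) + γ' (2 * n) + i) = b := by rw [key' i]
    have e3 : freq e (γ (2 * n) + γ' (2 * n) + j) = c := by rw [key j]
    have e4 : freq e' (γ (2 * n) + γ' (2 * n) + j) = d := by rw [key' j]
    rw [e1, e2, e3, e4]
    have habs : |a + b - (c + d)| ≤ |a - c| + |b - d| := by
      have : a + b - (c + d) = (a - c) + (b - d) := by ring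
      rw [this]; exact abs_add_le _ _
    have hfin : |a - c| + |b - d| ≤ 1 / (n : ℚ) := by
      have hn' : (0 : ℚ) < n := by exact_mod_cast hn
      have h2n : ((2 * n : ℕ) : ℚ) = 2 * (n : ℚ) := by push_cast; ring
      rw [h2n] at hA hB
      have : (1 : ℚ) / (2 * n) + 1 / (2 * n) = 1 / n := by
        field_simp
        norm_num
      linarith [add_le_add hA hB]
    linarith
end

section
/- Let (e, γ) be an actual event whose probability is 0, i.e. the sequence n ↦ Φ(e)(γ(n)) converges to 0, and let e' be a potential event with e'(n) ≤ e(n) for every n ∈ ℕ⁺. Then (e', n ↦ γ(6n)) is an actual event. -/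
theorem stmt5 (e e' γ : ℕ → ℕ) (he : IsPotential e) (h : IsActual e γ)
    (hnull : Filter.Tendsto (fun n => (freq e (γ n) : ℝ)) Filter.atTop (nhds 0))
    (hle : ∀ n, 1 ≤ n → e' n ≤ e n) :
    IsActual e' (fun n => γ (6 * n)) := by
  obtain ⟨h1, h2, h3⟩ := h
  have freq_nonneg : ∀ (f : ℕ → ℕ) (m : ℕ), 0 ≤ freq f m := by
    intro f m
    unfold freq
    apply div_nonneg
    · exact Finset.sum_nonneg fun i _ => by positivity
    · positivity
  have freq_le : ∀ m, freq e' m ≤ freq e m := by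
    intro m
    unfold freq
    have hsum : ∑ i ∈ Finset.Icc 1 m, (e' i : ℚ) ≤ ∑ i ∈ Finset.Icc 1 m, (e i : ℚ) := by
      apply Finset.sum_le_sum
      intro i hi
      exact_mod_cast hle i (Finset.mem_Icc.mp hi).1
    rcases Nat.eq_zero_or_pos m with hm | hm
    · subst hm; simp
    · exact div_le_div_of_nonneg_right hsum (by positivity) |>.trans_eq rfl |>.trans_eq rfl
  refine ⟨?_, ?_, ?_⟩
  · intro n hn
    exact h1 (6 * n) (by omega)
  · intro m n hm hmn
    exact h2 (6 * m) (6 * n) (by omega) (by omega)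
  · intro n hn i j
    set N := 6 * n with hN
    have hN1 : 1 ≤ N := by omega
    -- key: freq e (γ N + i) ≤ 1 / N for all i
    have key : ∀ i : ℕ, freq e (γ N + i) ≤ 1 / (N : ℚ) := by
      intro i
      have : ((freq e (γ N + i) : ℚ) : ℝ) ≤ ((1 / (N : ℚ) : ℚ) : ℝ) := by
        have htend : Filter.Tendsto (fun M => (freq e (γ M) : ℝ) + ((1 / (N : ℚ) : ℚ) : ℝ))
            Filter.atTop (nhds (((1 / (N : ℚ) : ℚ) : ℝ))) := by
          simpa using hnull.add_const (((1 / (N : ℚ) : ℚ) : ℝ))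
        refine ge_of_tendsto htend ?_
        filter_upwards [Filter.eventually_ge_atTop N] with M hM
        have hγle : γ N ≤ γ M := by
          rcases eq_or_lt_of_le hM with h' | h'
          · rw [h']
          · exact le_of_lt (h2 N M hN1 h')
        have hq : freq e (γ N + i) ≤ freq e (γ M) + 1 / (N : ℚ) := by
          have := h3 N hN1 i (γ M - γ N)
          have hMeq : γ N + (γ M - γ N) = γ M := by omega
          rw [hMeq] at this
          have := (abs_le.mp this).2
          linarith
        calc ((freq e (γ N + i) : ℚ) : ℝ) ≤ ((freq e (γ M) + 1 / (N : ℚ) : ℚ) : ℝ) := by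
              exact_mod_cast hq
          _ = (freq e (γ M) : ℝ) + ((1 / (N : ℚ) : ℚ) : ℝ) := by push_cast; ring
      exact_mod_cast this
    have hA : freq e' (γ N + i) ≤ 1 / (N : ℚ) := (freq_le _).trans (key i)
    have hB : freq e' (γ N + j) ≤ 1 / (N : ℚ) := (freq_le _).trans (key j)
    have hA0 := freq_nonneg e' (γ N + i)
    have hB0 := freq_nonneg e' (γ N + j)
    have hNn : 1 / (N : ℚ) ≤ 1 / (n : ℚ) := by
      apply one_div_le_one_div_of_le
      · exact_mod_cast hn
      · exact_mod_cast (by omega : n ≤ N)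
    rw [abs_le]
    constructor <;> linarith
end

section
/- Let (e, γ) and (e', γ') be actual events with e(n) ≤ e'(n) for every n ∈ ℕ⁺, and let p, p' ∈ ℝ be the limits of the sequences n ↦ Φ(e)(γ(n)) and n ↦ Φ(e')(γ'(n)) respectively. Then p ≤ p'. -/
lemma freq_mono (e e' : ℕ → ℕ) (hle : ∀ n, 1 ≤ n → e n ≤ e' n) (m : ℕ) :
    freq e m ≤ freq e' m := by
  unfold freq
  gcongr with i hi
  exact_mod_cast hle i (Finset.mem_Icc.mp hi).1

theorem stmt6 (e e' γ γ' : ℕ → ℕ) (he : IsPotential e) (he' : IsPotential e')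
    (h : IsActual e γ) (h' : IsActual e' γ') (p p' : ℝ)
    (hp : Filter.Tendsto (fun n => (freq e (γ n) : ℝ)) Filter.atTop (nhds p))
    (hp' : Filter.Tendsto (fun n => (freq e' (γ' n) : ℝ)) Filter.atTop (nhds p'))
    (hle : ∀ n, 1 ≤ n → e n ≤ e' n) :
    p ≤ p' := by
  have key : ∀ n, 1 ≤ n → (freq e (γ n) : ℝ) ≤ (freq e' (γ' n) : ℝ) + 2 / n := by
    intro n hn
    set m := max (γ n) (γ' n) with hm
    have h1 : |freq e (γ n) - freq e m| ≤ 1 / (n : ℚ) := by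
      have := h.2.2 n hn (m - γ n) 0
      rwa [add_zero, Nat.add_sub_cancel' (le_max_left _ _), abs_sub_comm] at this
    have h2 : |freq e' (γ' n) - freq e' m| ≤ 1 / (n : ℚ) := by
      have := h'.2.2 n hn (m - γ' n) 0
      rwa [add_zero, Nat.add_sub_cancel' (le_max_right _ _), abs_sub_comm] at this
    have h3 : freq e m ≤ freq e' m := freq_mono e e' hle m
    have hq : freq e (γ n) ≤ freq e' (γ' n) + 2 / n := by
      have a1 := abs_le.mp h1
      have a2 := abs_le.mp h2
      have : (2 : ℚ) / n = 1 / n + 1 / n := by ring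
      rw [this]; linarith [a1.1, a1.2, a2.1, a2.2]
    have := (Rat.cast_le (K := ℝ)).mpr hq
    push_cast at this ⊢
    linarith
  have h2n : Filter.Tendsto (fun n : ℕ => (freq e' (γ' n) : ℝ) + 2 / n)
      Filter.atTop (nhds (p' + 0)) :=
    hp'.add (tendsto_const_div_atTop_nhds_zero_nat 2)
  rw [add_zero] at h2n
  exact le_of_tendsto_of_tendsto hp h2n
    (Filter.eventually_atTop.mpr ⟨1, fun n hn => key n hn⟩)
end

section
/- Let e, e' be potential events, define e ∧ e' := n ↦ e(n)e'(n) and e ∨ e' := n ↦ e(n) + e'(n) − e(n)e'(n), and suppose (e, α), (e', β), (e ∧ e', γ), (e ∨ e', δ) are all actual events, with probabilities p, p', q, r respectively (the limits of the corresponding frequency sequences). Then r + q = p + p'. -/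
lemma tendsto_freq_of_actual (e γ : ℕ → ℕ) (h : IsActual e γ) (p : ℝ)
    (hp : Filter.Tendsto (fun n => (freq e (γ n) : ℝ)) Filter.atTop (nhds p)) :
    Filter.Tendsto (fun k => (freq e k : ℝ)) Filter.atTop (nhds p) := by
  rw [Metric.tendsto_atTop] at hp ⊢
  intro ε hε
  obtain ⟨n₀, hn₀⟩ := exists_nat_gt (2 / ε)
  obtain ⟨N, hN⟩ := hp (ε / 2) (by positivity)
  set n := max (max n₀ 1) N with hn
  have hn1 : 1 ≤ n := le_trans (le_max_right n₀ 1) (le_max_left _ N)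
  refine ⟨γ n, fun k hk => ?_⟩
  have hkey := h.2.2 n hn1 (k - γ n) 0
  rw [Nat.add_sub_cancel' hk, Nat.add_zero] at hkey
  have hkeyR : |(freq e k : ℝ) - (freq e (γ n) : ℝ)| ≤ 1 / (n : ℝ) := by
    have := (Rat.cast_le (K := ℝ)).mpr hkey
    push_cast at this
    rw [← Rat.cast_sub, ← Rat.cast_abs] at this ⊢
    exact_mod_cast this
  have hnε : 1 / (n : ℝ) < ε / 2 := by
    have h1 : (2 / ε : ℝ) < n₀ := hn₀
    have h2 : (n₀ : ℝ) ≤ n := by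
      exact_mod_cast le_trans (le_max_left n₀ 1) (le_max_left _ N)
    have hnpos : (0 : ℝ) < n := by positivity
    rw [div_lt_div_iff₀ hnpos (by norm_num : (0:ℝ) < 2)]
    calc (1 : ℝ) * 2 = 2 := by ring
      _ = (2 / ε) * ε := by field_simp
      _ < n * ε := by
        apply mul_lt_mul_of_pos_right _ hε
        exact lt_of_lt_of_le h1 h2
      _ = ε * n := mul_comm _ _
  have hNn : |((freq e (γ n) : ℝ)) - p| < ε / 2 := by
    have := hN n (le_trans (le_max_right _ N) le_rfl)
    rwa [Real.dist_eq] at this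
  rw [Real.dist_eq]
  calc |(freq e k : ℝ) - p|
      ≤ |(freq e k : ℝ) - (freq e (γ n) : ℝ)| + |((freq e (γ n) : ℝ)) - p| := by
        have := abs_sub_le ((freq e k : ℝ)) ((freq e (γ n) : ℝ)) p
        linarith [abs_sub_le ((freq e k : ℝ)) ((freq e (γ n) : ℝ)) p]
    _ < ε / 2 + ε / 2 := by
        apply add_lt_add_of_le_of_lt (le_trans hkeyR (le_of_lt hnε)) hNn
    _ = ε := by ring

theorem stmt7 (e e' α β γ δ : ℕ → ℕ) (he : IsPotential e) (he' : IsPotential e')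
    (hα : IsActual e α) (hβ : IsActual e' β)
    (hγ : IsActual (fun n => e n * e' n) γ)
    (hδ : IsActual (fun n => e n + e' n - e n * e' n) δ)
    (p p' q r : ℝ)
    (hp : Filter.Tendsto (fun n => (freq e (α n) : ℝ)) Filter.atTop (nhds p))
    (hp' : Filter.Tendsto (fun n => (freq e' (β n) : ℝ)) Filter.atTop (nhds p'))
    (hq : Filter.Tendsto (fun n => (freq (fun k => e k * e' k) (γ n) : ℝ))
      Filter.atTop (nhds q))
    (hr : Filter.Tendsto
      (fun n => (freq (fun k => e k + e' k - e k * e' k) (δ n) : ℝ))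
      Filter.atTop (nhds r)) :
    r + q = p + p' := by
  have Hp := tendsto_freq_of_actual e α hα p hp
  have Hp' := tendsto_freq_of_actual e' β hβ p' hp'
  have Hq := tendsto_freq_of_actual _ γ hγ q hq
  have Hr := tendsto_freq_of_actual _ δ hδ r hr
  -- pointwise identity
  have key : ∀ k : ℕ,
      (freq (fun k => e k + e' k - e k * e' k) k : ℝ)
        + (freq (fun k => e k * e' k) k : ℝ)
      = (freq e k : ℝ) + (freq e' k : ℝ) := by
    intro k
    have hsum : ∀ i ∈ Finset.Icc 1 k,
        ((e i + e' i - e i * e' i : ℕ) : ℝ) + ((e i * e' i : ℕ) : ℝ)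
          = (e i : ℝ) + (e' i : ℝ) := by
      intro i hi
      have hi1 : 1 ≤ i := (Finset.mem_Icc.mp hi).1
      have hle : e i * e' i ≤ e i + e' i := by
        calc e i * e' i ≤ e i * 1 := Nat.mul_le_mul_left _ (he' i hi1)
          _ = e i := Nat.mul_one _
          _ ≤ e i + e' i := Nat.le_add_right _ _
      have : e i + e' i - e i * e' i + e i * e' i = e i + e' i :=
        Nat.sub_add_cancel hle
      exact_mod_cast congrArg (Nat.cast (R := ℝ)) this
    simp only [freq]
    push_cast
    rw [← add_div, ← add_div, ← Finset.sum_add_distrib,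
        ← Finset.sum_add_distrib]
    congr 1
    apply Finset.sum_congr rfl
    intro i hi
    have := hsum i hi
    push_cast at this ⊢
    linarith
  have Hsum : Filter.Tendsto
      (fun k => (freq (fun k => e k + e' k - e k * e' k) k : ℝ)
        + (freq (fun k => e k * e' k) k : ℝ)) Filter.atTop (nhds (r + q)) :=
    Hr.add Hq
  have Hsum' : Filter.Tendsto
      (fun k => (freq e k : ℝ) + (freq e' k : ℝ)) Filter.atTop (nhds (p + p')) :=
    Hp.add Hp'
  have : Filter.Tendsto
      (fun k => (freq e k : ℝ) + (freq e' k : ℝ)) Filter.atTop (nhds (r + q)) := by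
    refine Hsum.congr fun k => key k
  exact tendsto_nhds_unique this Hsum'
end

section
/- Let π = [π₁, …, π_m] be a nonempty finite list of elements of {0,1} and let e be the purely periodic potential event e(i) = π_{(rm(i−1, m))+1}, where rm(a, b) is the remainder of a divided by b. Then (e, n ↦ 4nm) is an actual event and its probability (the limit of n ↦ Φ(e)(4nm)) equals (∑_{k=1}^m π_k)/m. -/
lemma sum_range_getD (l : List ℕ) : ∑ i ∈ Finset.range l.length, l.getD i 0 = l.sum := by
  induction l with
  | nil => simp
  | cons a t ih =>
    rw [List.length_cons, Finset.sum_range_succ']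
    simp only [List.getD_cons_succ, List.getD_cons_zero, List.sum_cons, ih]
    omega

lemma Icc_one_eq_Ioc (M : ℕ) : Finset.Icc 1 M = Finset.Ioc 0 M := by
  ext x; simp [Nat.lt_iff_add_one_le]

lemma Ioc_eq_Ico (a b : ℕ) : Finset.Ioc a b = Finset.Ico (a+1) (b+1) := by
  ext x; simp

section aux
variable (π : List ℕ) (e : ℕ → ℕ)

lemma shift_sum (he : ∀ i, 1 ≤ i → e i = π.getD ((i - 1) % π.length) 0)
    (c : ℕ) : ∑ i ∈ Finset.Ioc (c * π.length) (c * π.length + π.length), e i = π.sum := by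
  rw [Ioc_eq_Ico, Finset.sum_Ico_eq_sum_range, ← sum_range_getD π]
  have hlen : c * π.length + π.length + 1 - (c * π.length + 1) = π.length := by omega
  rw [hlen]
  apply Finset.sum_congr rfl
  intro i hi
  rw [Finset.mem_range] at hi
  rw [he _ (by omega)]
  congr 1
  have : c * π.length + 1 + i - 1 = i + c * π.length := by omega
  rw [this, Nat.add_mul_mod_self_right, Nat.mod_eq_of_lt hi]

lemma sum_mul_period (he : ∀ i, 1 ≤ i → e i = π.getD ((i - 1) % π.length) 0)
    (k : ℕ) : ∑ i ∈ Finset.Ioc 0 (k * π.length), e i = k * π.sum := by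
  induction k with
  | zero => simp
  | succ k ih =>
    have h1 : k * π.length ≤ (k + 1) * π.length := by nlinarith
    rw [← Finset.sum_Ioc_consecutive e (Nat.zero_le (k * π.length)) h1, ih,
      show (k+1) * π.length = k * π.length + π.length by ring, shift_sum π e he k]
    ring

lemma sum_bounds (hbits : ∀ x ∈ π, x ≤ 1)
    (he : ∀ i, 1 ≤ i → e i = π.getD ((i - 1) % π.length) 0) (N : ℕ) (hπ : π ≠ []) :
    (N / π.length) * π.sum ≤ ∑ i ∈ Finset.Icc 1 N, e i ∧
      ∑ i ∈ Finset.Icc 1 N, e i ≤ (N / π.length) * π.sum + N % π.length := by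
  have hm : 0 < π.length := List.length_pos_iff.2 hπ
  set k := N / π.length with hk
  have hkm : k * π.length ≤ N := Nat.div_mul_le_self N π.length
  have hmod : N % π.length + k * π.length = N := by rw [Nat.mul_comm]; exact Nat.mod_add_div N π.length
  have hsplit : ∑ i ∈ Finset.Icc 1 N, e i
      = k * π.sum + ∑ i ∈ Finset.Ioc (k * π.length) N, e i := by
    rw [Icc_one_eq_Ioc,
      ← Finset.sum_Ioc_consecutive e (Nat.zero_le (k * π.length)) hkm,
      sum_mul_period π e he k]
  constructor
  · rw [hsplit]; exact Nat.le_add_right _ _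
  · rw [hsplit]
    have hb : ∑ i ∈ Finset.Ioc (k * π.length) N, e i ≤ N % π.length := by
      calc ∑ i ∈ Finset.Ioc (k * π.length) N, e i
          ≤ ∑ _i ∈ Finset.Ioc (k * π.length) N, 1 := by
            apply Finset.sum_le_sum
            intro i hi
            rw [Finset.mem_Ioc] at hi
            rw [he i (by omega)]
            have hlt : (i - 1) % π.length < π.length := Nat.mod_lt _ hm
            rw [List.getD_eq_getElem π 0 hlt]
            exact hbits _ (List.getElem_mem hlt)
        _ = N - k * π.length := by simp [Nat.card_Ioc]
        _ = N % π.length := by omega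
    omega

end aux

section main
variable (π : List ℕ) (e : ℕ → ℕ)

lemma freq_cast (N : ℕ) : freq e N = ((∑ i ∈ Finset.Icc 1 N, e i : ℕ) : ℚ) / N := by
  unfold freq; push_cast; ring

lemma freq_close (hπ : π ≠ []) (hbits : ∀ x ∈ π, x ≤ 1)
    (he : ∀ i, 1 ≤ i → e i = π.getD ((i - 1) % π.length) 0) (N : ℕ) (hN : 1 ≤ N) :
    |freq e N - (π.sum : ℚ) / (π.length : ℚ)| ≤ (π.length : ℚ) / (N : ℚ) := by
  obtain ⟨h1, h2⟩ := sum_bounds π e hbits he N hπ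
  have hm : 0 < π.length := List.length_pos_iff.2 hπ
  have hSm : π.sum ≤ π.length := by
    calc π.sum ≤ π.length • 1 := List.sum_le_card_nsmul π 1 hbits
      _ = π.length := by simp
  set SN := ∑ i ∈ Finset.Icc 1 N, e i with hSN
  set k := N / π.length with hk
  set r := N % π.length with hr
  have hNkr : N = k * π.length + r := by
    rw [hk, hr, Nat.mul_comm]
    exact (Nat.div_add_mod N π.length).symm
  have hrm : r < π.length := Nat.mod_lt _ hm
  -- cast everything to ℚ
  have e1 : (k : ℚ) * π.sum ≤ SN := by exact_mod_cast h1
  have e2 : (SN : ℚ) ≤ (k : ℚ) * π.sum + r := by exact_mod_cast h2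
  have eN : (N : ℚ) = (k : ℚ) * π.length + r := by exact_mod_cast congrArg (Nat.cast : ℕ → ℚ) hNkr
  have erm : (r : ℚ) < π.length := by exact_mod_cast hrm
  have eSm : (π.sum : ℚ) ≤ π.length := by exact_mod_cast hSm
  have hmQ : (0 : ℚ) < π.length := by exact_mod_cast hm
  have hNQ : (0 : ℚ) < N := by exact_mod_cast hN
  have hkQ : (0 : ℚ) ≤ k := Nat.cast_nonneg k
  have hrQ : (0 : ℚ) ≤ r := Nat.cast_nonneg r
  have hSQ : (0 : ℚ) ≤ π.sum := Nat.cast_nonneg π.sum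
  rw [freq_cast]
  have key : (SN : ℚ) / (N : ℚ) - (π.sum : ℚ) / (π.length : ℚ)
      = ((SN : ℚ) * π.length - N * π.sum) / (N * π.length) := by
    field_simp
  rw [key, abs_div, abs_of_pos (by positivity : (0:ℚ) < (N:ℚ) * π.length)]
  rw [div_le_div_iff₀ (by positivity) hNQ]
  have habs : |(SN : ℚ) * π.length - N * π.sum| ≤ (π.length : ℚ) * π.length := by
    rw [abs_le]
    constructor
    · nlinarith [mul_le_mul_of_nonneg_right e1 hmQ.le]
    · nlinarith [mul_le_mul_of_nonneg_right e2 hmQ.le]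
  calc |(SN : ℚ) * π.length - N * π.sum| * N ≤ ((π.length:ℚ) * π.length) * N := by
        exact mul_le_mul_of_nonneg_right habs hNQ.le
    _ = (π.length : ℚ) * (N * π.length) := by ring

lemma freq_exact (hπ : π ≠ []) (hbits : ∀ x ∈ π, x ≤ 1)
    (he : ∀ i, 1 ≤ i → e i = π.getD ((i - 1) % π.length) 0) (k : ℕ) (hk : 0 < k) :
    freq e (k * π.length) = (π.sum : ℚ) / (π.length : ℚ) := by
  have hm : 0 < π.length := List.length_pos_iff.2 hπ
  obtain ⟨h1, h2⟩ := sum_bounds π e hbits he (k * π.length) hπ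
  rw [Nat.mul_div_cancel _ hm] at h1 h2
  rw [Nat.mul_mod_left] at h2
  have hsum : ∑ i ∈ Finset.Icc 1 (k * π.length), e i = k * π.sum := le_antisymm (by omega) h1
  rw [freq_cast, hsum]
  have hkQ : ((k : ℚ)) ≠ 0 := by positivity
  have hmQ : ((π.length : ℚ)) ≠ 0 := by positivity
  push_cast
  field_simp
end main

theorem stmt8 (π : List ℕ) (hπ : π ≠ []) (hbits : ∀ x ∈ π, x ≤ 1)
    (e : ℕ → ℕ) (he : ∀ i, 1 ≤ i → e i = π.getD ((i - 1) % π.length) 0) :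
    IsActual e (fun n => 4 * n * π.length) ∧
    Filter.Tendsto (fun n => (freq e (4 * n * π.length) : ℝ)) Filter.atTop
      (nhds ((π.sum : ℝ) / (π.length : ℝ))) := by
  have hm : 0 < π.length := List.length_pos_iff.2 hπ
  have hmQ : (0:ℚ) < π.length := by exact_mod_cast hm
  constructor
  · refine ⟨?_, ?_, ?_⟩
    · intro n hn
      exact Nat.mul_pos (Nat.mul_pos (by norm_num) hn) hm
    · intro a b _ hab
      dsimp only
      have h4 : 4 * a < 4 * b := by omega
      exact Nat.mul_lt_mul_of_lt_of_le h4 (le_refl _) hm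
    · intro n hn i j
      dsimp only
      have hnQ : (0:ℚ) < n := by exact_mod_cast hn
      set c := (π.sum : ℚ) / (π.length : ℚ) with hc
      have hb : ∀ i : ℕ, |freq e (4*n*π.length + i) - c| ≤ 1/(4*(n:ℚ)) := by
        intro i
        have hpos : 0 < 4*n*π.length := Nat.mul_pos (Nat.mul_pos (by norm_num) hn) hm
        have hN1 : 1 ≤ 4*n*π.length + i := by omega
        refine (freq_close π e hπ hbits he _ hN1).trans ?_
        rw [div_le_div_iff₀ (by positivity) (by positivity)]
        push_cast
        nlinarith [(Nat.cast_nonneg i : (0:ℚ) ≤ i)]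
      calc |freq e (4*n*π.length + i) - freq e (4*n*π.length + j)|
          ≤ |freq e (4*n*π.length + i) - c| + |c - freq e (4*n*π.length + j)| :=
            abs_sub_le _ _ _
        _ ≤ 1/(4*(n:ℚ)) + 1/(4*(n:ℚ)) := add_le_add (hb i) (by rw [abs_sub_comm]; exact hb j)
        _ ≤ 1/(n:ℚ) := by
            rw [← add_div, div_le_div_iff₀ (by positivity) hnQ]
            nlinarith
  · refine Filter.Tendsto.congr' ?_ tendsto_const_nhds
    filter_upwards [Filter.eventually_ge_atTop 1] with n hn
    have h4 : 0 < 4 * n := by omega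
    have := freq_exact π e hπ hbits he (4*n) h4
    rw [this, Rat.cast_div, Rat.cast_natCast, Rat.cast_natCast]
end

section
/- Let (e, γ) be an actual event and let e⁺ be the shifted potential event defined by e⁺(1) = 0 and e⁺(n+1) = e(n) for n ∈ ℕ⁺. Then (e⁺, n ↦ γ(3n) + 1) is an actual event, and the sequence n ↦ Φ(e⁺)(γ(3n)+1) converges to the same real number as the sequence n ↦ Φ(e)(γ(n)). -/
lemma aux_sum_le (e : ℕ → ℕ) (he : IsPotential e) (n : ℕ) :
    (∑ i ∈ Finset.Icc 1 n, (e i : ℚ)) ≤ n := by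
  have : ∑ i ∈ Finset.Icc 1 n, (e i : ℚ) ≤ ∑ _i ∈ Finset.Icc 1 n, (1 : ℚ) :=
    Finset.sum_le_sum fun i hi => by
      have := he i (Finset.mem_Icc.mp hi).1; exact_mod_cast this
  simpa [Nat.card_Icc] using this

lemma aux_freq_nonneg (e : ℕ → ℕ) (n : ℕ) : 0 ≤ freq e n := by
  unfold freq; positivity

lemma aux_freq_le_one (e : ℕ → ℕ) (he : IsPotential e) (n : ℕ) : freq e n ≤ 1 := by
  rcases Nat.eq_zero_or_pos n with h | h
  · subst h; simp [freq]
  · unfold freq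
    rw [div_le_one (by exact_mod_cast h)]
    exact aux_sum_le e he n

lemma aux_shift_sum (e e' : ℕ → ℕ) (hshift0 : e' 1 = 0)
    (hshift : ∀ n, 1 ≤ n → e' (n + 1) = e n) (m : ℕ) :
    ∑ i ∈ Finset.Icc 1 (m + 1), e' i = ∑ i ∈ Finset.Icc 1 m, e i := by
  induction m with
  | zero => simp [hshift0]
  | succ k ih =>
    have h1 : ∑ i ∈ Finset.Icc 1 (k + 1 + 1), e' i
        = ∑ i ∈ Finset.Icc 1 (k + 1), e' i + e' (k + 1 + 1) :=
      Finset.sum_Icc_succ_top (by omega) e'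
    have h2 : ∑ i ∈ Finset.Icc 1 (k + 1), e i
        = ∑ i ∈ Finset.Icc 1 k, e i + e (k + 1) :=
      Finset.sum_Icc_succ_top (by omega) e
    rw [h1, h2, ih, hshift (k + 1) (by omega)]

lemma aux_freq_shift (e e' : ℕ → ℕ) (he : IsPotential e) (hshift0 : e' 1 = 0)
    (hshift : ∀ n, 1 ≤ n → e' (n + 1) = e n) (m : ℕ) (hm : 1 ≤ m) :
    |freq e' (m + 1) - freq e m| ≤ 1 / ((m : ℚ) + 1) := by
  have hm0 : (0 : ℚ) < m := by exact_mod_cast hm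
  have hm1 : (0 : ℚ) < (m : ℚ) + 1 := by positivity
  set S := ∑ i ∈ Finset.Icc 1 m, (e i : ℚ) with hS
  have hS0 : 0 ≤ S := Finset.sum_nonneg fun i _ => by positivity
  have hSle : S ≤ m := aux_sum_le e he m
  have hsum : ∑ i ∈ Finset.Icc 1 (m + 1), (e' i : ℚ) = S := by
    rw [hS]
    exact_mod_cast congrArg (Nat.cast : ℕ → ℚ) (aux_shift_sum e e' hshift0 hshift m)
  have hkey : freq e' (m + 1) - freq e m = -(S / ((m : ℚ) * ((m : ℚ) + 1))) := by
    unfold freq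
    rw [hsum]
    push_cast
    field_simp
    ring
  rw [hkey, abs_neg, abs_of_nonneg (by positivity)]
  rw [div_le_div_iff₀ (by positivity) hm1]
  nlinarith

theorem stmt10 (e e' γ : ℕ → ℕ) (he : IsPotential e) (h : IsActual e γ)
    (hshift0 : e' 1 = 0) (hshift : ∀ n, 1 ≤ n → e' (n + 1) = e n) :
    IsActual e' (fun n => γ (3 * n) + 1) ∧
    ∃ p : ℝ,
      Filter.Tendsto (fun n => (freq e (γ n) : ℝ)) Filter.atTop (nhds p) ∧
      Filter.Tendsto (fun n => (freq e' (γ (3 * n) + 1) : ℝ)) Filter.atTop (nhds p) := by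
  obtain ⟨hγ1, hγmono, hγfreq⟩ := h
  have hγge : ∀ n, 1 ≤ n → n ≤ γ n := by
    intro n hn
    induction n with
    | zero => omega
    | succ k ih =>
      rcases Nat.lt_or_ge 1 (k + 1) with h1 | h1
      · have hk : 1 ≤ k := by omega
        have := hγmono k (k + 1) hk (by omega)
        have := ih hk
        omega
      · have hke : k + 1 = 1 := by omega
        rw [hke]; exact hγ1 1 le_rfl
  have hbound : ∀ n, 1 ≤ n → ∀ i j : ℕ,
      |freq e' (γ (3 * n) + 1 + i) - freq e' (γ (3 * n) + 1 + j)| ≤ 1 / (n : ℚ) := by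
    intro n hn i j
    have h3n : 1 ≤ 3 * n := by omega
    have hγ3n : 3 * n ≤ γ (3 * n) := hγge (3 * n) h3n
    set A := γ (3 * n) + i with hA
    set B := γ (3 * n) + j with hB
    have hA1 : 1 ≤ A := by have := hγ1 (3 * n) h3n; omega
    have hB1 : 1 ≤ B := by have := hγ1 (3 * n) h3n; omega
    have eA : γ (3 * n) + 1 + i = A + 1 := by omega
    have eB : γ (3 * n) + 1 + j = B + 1 := by omega
    rw [eA, eB]
    have t1 := aux_freq_shift e e' he hshift0 hshift A hA1
    have t2 := aux_freq_shift e e' he hshift0 hshift B hB1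
    have t3 := hγfreq (3 * n) h3n i j
    have hn0 : (0 : ℚ) < n := by exact_mod_cast hn
    have h3n0 : (0 : ℚ) < 3 * (n : ℚ) := by positivity
    have hAq : 3 * (n : ℚ) ≤ (A : ℚ) + 1 := by
      have : 3 * n ≤ A + 1 := by omega
      exact_mod_cast this
    have hBq : 3 * (n : ℚ) ≤ (B : ℚ) + 1 := by
      have : 3 * n ≤ B + 1 := by omega
      exact_mod_cast this
    have b1 : 1 / ((A : ℚ) + 1) ≤ 1 / (3 * (n : ℚ)) := one_div_le_one_div_of_le h3n0 hAq
    have b2 : 1 / ((B : ℚ) + 1) ≤ 1 / (3 * (n : ℚ)) := one_div_le_one_div_of_le h3n0 hBq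
    have t3' : |freq e A - freq e B| ≤ 1 / (3 * (n : ℚ)) := by
      have hc : ((3 * n : ℕ) : ℚ) = 3 * (n : ℚ) := by push_cast; ring
      rw [hA, hB]
      calc |freq e (γ (3 * n) + i) - freq e (γ (3 * n) + j)| ≤ 1 / ((3 * n : ℕ) : ℚ) := t3
        _ = 1 / (3 * (n : ℚ)) := by rw [hc]
    have tri : |freq e' (A + 1) - freq e' (B + 1)| ≤
        |freq e' (A + 1) - freq e A| + |freq e A - freq e B| + |freq e B - freq e' (B + 1)| := by
      calc |freq e' (A + 1) - freq e' (B + 1)|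
          ≤ |freq e' (A + 1) - freq e A| + |freq e A - freq e' (B + 1)| := abs_sub_le _ _ _
        _ ≤ |freq e' (A + 1) - freq e A| +
            (|freq e A - freq e B| + |freq e B - freq e' (B + 1)|) := by
            have := abs_sub_le (freq e A) (freq e B) (freq e' (B + 1))
            linarith
        _ = _ := by ring
    have t2' : |freq e B - freq e' (B + 1)| ≤ 1 / ((B : ℚ) + 1) := by
      rw [abs_sub_comm]; exact t2
    have hsum3 : 1 / (3 * (n : ℚ)) + 1 / (3 * (n : ℚ)) + 1 / (3 * (n : ℚ)) = 1 / (n : ℚ) := by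
      field_simp
      norm_num
    linarith
  refine ⟨⟨fun n _ => by show 1 ≤ γ (3 * n) + 1; omega, fun m n hm hmn => ?_, hbound⟩, ?_⟩
  · have : γ (3 * m) < γ (3 * n) := hγmono (3 * m) (3 * n) (by omega) (by omega)
    show γ (3 * m) + 1 < γ (3 * n) + 1
    omega
  · set a : ℕ → ℝ := fun n => (freq e (γ n) : ℝ) with ha
    have key2 : ∀ N n m : ℕ, 1 ≤ N → N ≤ n → N ≤ m → |a n - a m| ≤ 1 / (N : ℝ) := by
      intro N n m hN hNn hNm
      have h1 : γ N ≤ γ n := by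
        rcases Nat.eq_or_lt_of_le hNn with rfl | hlt
        · exact le_rfl
        · exact (hγmono N n hN hlt).le
      have h2 : γ N ≤ γ m := by
        rcases Nat.eq_or_lt_of_le hNm with rfl | hlt
        · exact le_rfl
        · exact (hγmono N m hN hlt).le
      have hq := hγfreq N hN (γ n - γ N) (γ m - γ N)
      rw [Nat.add_sub_cancel' h1, Nat.add_sub_cancel' h2] at hq
      have hq2 : ((|freq e (γ n) - freq e (γ m)| : ℚ) : ℝ) ≤ ((1 / (N : ℚ) : ℚ) : ℝ) := by
        exact_mod_cast hq
      push_cast at hq2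
      simp only [ha]
      exact hq2
    have hmem : ∀ k : ℕ, (0 : ℝ) ≤ (freq e k : ℝ) ∧ (freq e k : ℝ) ≤ 1 := by
      intro k
      constructor
      · exact_mod_cast aux_freq_nonneg e k
      · exact_mod_cast aux_freq_le_one e he k
    have hcauchy : CauchySeq a := by
      refine cauchySeq_of_le_tendsto_0 (fun N => 1 / ((max 1 N : ℕ) : ℝ)) ?_ ?_
      · intro n m N hn hm
        rw [Real.dist_eq]
        rcases Nat.eq_zero_or_pos N with rfl | hN
        · show |a n - a m| ≤ 1 / ((max 1 0 : ℕ) : ℝ)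
          have h1 := hmem (γ n)
          have h2 := hmem (γ m)
          have hone : 1 / ((max 1 0 : ℕ) : ℝ) = 1 := by norm_num
          rw [hone, abs_sub_le_iff]
          constructor <;> (simp only [ha]; linarith [h1.1, h1.2, h2.1, h2.2])
        · show |a n - a m| ≤ 1 / ((max 1 N : ℕ) : ℝ)
          have hmax : max 1 N = N := max_eq_right hN
          rw [hmax]
          exact key2 N n m hN hn hm
      · have hev : ∀ᶠ N : ℕ in Filter.atTop, 1 / (N : ℝ) = 1 / ((max 1 N : ℕ) : ℝ) := by
          filter_upwards [Filter.eventually_ge_atTop 1] with N hN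
          rw [max_eq_right hN]
        exact Filter.Tendsto.congr' hev tendsto_one_div_atTop_nhds_zero_nat
    obtain ⟨p, hp⟩ := cauchySeq_tendsto_of_complete hcauchy
    refine ⟨p, hp, ?_⟩
    have h3mul : Filter.Tendsto (fun n : ℕ => 3 * n) Filter.atTop Filter.atTop :=
      Filter.tendsto_atTop_atTop_of_monotone (fun a b hab => by omega) (fun b => ⟨b, by omega⟩)
    have h3 : Filter.Tendsto (fun n => a (3 * n)) Filter.atTop (nhds p) := hp.comp h3mul
    set d : ℕ → ℝ := fun n => (freq e' (γ (3 * n) + 1) : ℝ) - a (3 * n) with hd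
    have hd0 : Filter.Tendsto d Filter.atTop (nhds 0) := by
      refine squeeze_zero_norm' ?_ tendsto_one_div_atTop_nhds_zero_nat
      filter_upwards [Filter.eventually_ge_atTop 1] with n hn
      have h3n : 1 ≤ 3 * n := by omega
      have hγ3n : 3 * n ≤ γ (3 * n) := hγge (3 * n) h3n
      have hm1 : 1 ≤ γ (3 * n) := by omega
      have t := aux_freq_shift e e' he hshift0 hshift (γ (3 * n)) hm1
      have t' : |(freq e' (γ (3 * n) + 1) : ℝ) - (freq e (γ (3 * n)) : ℝ)| ≤
          1 / ((γ (3 * n) : ℝ) + 1) := by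
        have t2 : ((|freq e' (γ (3 * n) + 1) - freq e (γ (3 * n))| : ℚ) : ℝ) ≤
            ((1 / ((γ (3 * n) : ℚ) + 1) : ℚ) : ℝ) := by exact_mod_cast t
        push_cast at t2
        exact t2
      have hle : 1 / ((γ (3 * n) : ℝ) + 1) ≤ 1 / (n : ℝ) := by
        apply one_div_le_one_div_of_le (by exact_mod_cast hn)
        have hh : (n : ℝ) ≤ (γ (3 * n) : ℝ) := by exact_mod_cast le_trans (by omega) hγ3n
        linarith
      simp only [hd, Real.norm_eq_abs, ha]
      exact le_trans t' hle
    have hfin : Filter.Tendsto (fun n => a (3 * n) + d n) Filter.atTop (nhds (p + 0)) :=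
      h3.add hd0
    rw [add_zero] at hfin
    convert hfin using 2 with n
    simp [hd]
end

section
/- Let α be a finite list of elements of {0,1} of length ℓ(α) and π a nonempty finite list of elements of {0,1} of length ℓ(π), and let ‖α,π‖ be the regular potential event defined by ‖α,π‖(i) = α_i for 1 ≤ i ≤ ℓ(α) and ‖α,π‖(i) = π_{rm(i−ℓ(α)−1, ℓ(π))+1} for i > ℓ(α), where rm(a,b) is the remainder of a divided by b. Then there exists a strictly increasing γ : ℕ⁺ → ℕ⁺ such that (‖α,π‖, γ) is an actual event and its probability (the limit of n ↦ Φ(‖α,π‖)(γ(n))) equals (∑_{k=1}^{ℓ(π)} π_k)/ℓ(π). -/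
/-- The regular potential event `‖α,π‖`: it equals `α` on indices `1,…,ℓ(α)` and
then repeats `π` periodically. -/
def regEvent (α π : List ℕ) : ℕ → ℕ := fun i =>
  if i ≤ α.length then α.getD (i - 1) 0
  else π.getD ((i - α.length - 1) % π.length) 0

/-- A potential event is regular if it is pointwise equal (on positive indices)
to some `‖α,π‖` with `α`, `π` lists over `{0,1}` and `π` nonempty. -/
def IsRegularEvent (e : ℕ → ℕ) : Prop :=
  ∃ α π : List ℕ, (∀ x ∈ α, x ≤ 1) ∧ (∀ x ∈ π, x ≤ 1) ∧ π ≠ [] ∧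
    ∀ i, 1 ≤ i → e i = regEvent α π i


open Finset


lemma getD_le_one {l : List ℕ} (h : ∀ x ∈ l, x ≤ 1) (k : ℕ) : l.getD k 0 ≤ 1 := by
  rcases lt_or_ge k l.length with hk | hk
  · rw [List.getD_eq_getElem _ _ hk]; exact h _ (List.getElem_mem hk)
  · rw [List.getD_eq_default _ _ hk]; exact Nat.zero_le 1

lemma sum_getD (l : List ℕ) : ∑ j ∈ Finset.range l.length, (l.getD j 0 : ℚ) = (l.sum : ℚ) := by
  induction l with
  | nil => simp
  | cons a t ih =>
    rw [List.length_cons, Finset.sum_range_succ']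
    simp only [List.getD_cons_succ, List.getD_cons_zero, ih, List.sum_cons]
    push_cast; ring

lemma regEvent_le_one (α π : List ℕ) (hαbits : ∀ x ∈ α, x ≤ 1) (hπbits : ∀ x ∈ π, x ≤ 1)
    (i : ℕ) : regEvent α π i ≤ 1 := by
  unfold regEvent; split
  · exact getD_le_one hαbits _
  · exact getD_le_one hπbits _

lemma block_sum (α π : List ℕ) (q : ℕ) :
    ∑ i ∈ range (α.length + q * π.length), (regEvent α π (1 + i) : ℚ)
      = (α.sum : ℚ) + q * π.sum := by
  induction q with
  | zero =>
    simp only [Nat.zero_eq, zero_mul, add_zero, Nat.cast_zero, zero_mul]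
    rw [← sum_getD α]
    apply Finset.sum_congr rfl
    intro i hi
    rw [Finset.mem_range] at hi
    unfold regEvent
    rw [if_pos (by omega)]
    have h1 : 1 + i - 1 = i := by omega
    rw [h1]
  | succ q ih =>
    have h : α.length + (q + 1) * π.length = (α.length + q * π.length) + π.length := by ring
    rw [h, Finset.sum_range_add, ih]
    have h2 : ∑ i ∈ range π.length, (regEvent α π (1 + (α.length + q * π.length + i)) : ℚ)
        = (π.sum : ℚ) := by
      rw [← sum_getD π]
      apply Finset.sum_congr rfl
      intro j hj
      rw [Finset.mem_range] at hj
      unfold regEvent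
      rw [if_neg (by omega)]
      congr 2
      have : 1 + (α.length + q * π.length + j) - α.length - 1 = q * π.length + j := by omega
      rw [this, Nat.mul_comm q π.length, Nat.mul_add_mod, Nat.mod_eq_of_lt hj]
    rw [h2]; push_cast; ring

lemma S_bound (α π : List ℕ) (hαbits : ∀ x ∈ α, x ≤ 1) (hπbits : ∀ x ∈ π, x ≤ 1)
    (hπ : π ≠ []) (m : ℕ) :
    |(∑ i ∈ range m, (regEvent α π (1 + i) : ℚ)) - m * ((π.sum : ℚ) / π.length)|
      ≤ α.length + π.length := by
  have hL : 0 < π.length := List.length_pos_iff.mpr hπ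
  have hLQ : (0 : ℚ) < π.length := by exact_mod_cast hL
  set p : ℚ := (π.sum : ℚ) / π.length with hp
  have hsle : (π.sum : ℚ) ≤ π.length := by
    exact_mod_cast (by simpa using List.sum_le_card_nsmul π 1 hπbits)
  have hαle : (α.sum : ℚ) ≤ α.length := by
    exact_mod_cast (by simpa using List.sum_le_card_nsmul α 1 hαbits)
  have hp0 : 0 ≤ p := div_nonneg (by positivity) hLQ.le
  have hp1 : p ≤ 1 := (div_le_one hLQ).mpr hsle
  have hterm : ∀ i, (0 : ℚ) ≤ (regEvent α π i : ℚ) ∧ (regEvent α π i : ℚ) ≤ 1 := by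
    intro i
    constructor
    · positivity
    · exact_mod_cast regEvent_le_one α π hαbits hπbits i
  have hsum_bd : ∀ a r : ℕ, (0 : ℚ) ≤ ∑ j ∈ range r, (regEvent α π (1 + (a + j)) : ℚ) ∧
      (∑ j ∈ range r, (regEvent α π (1 + (a + j)) : ℚ)) ≤ r := by
    intro a r
    constructor
    · exact Finset.sum_nonneg fun j _ => (hterm _).1
    · calc ∑ j ∈ range r, (regEvent α π (1 + (a + j)) : ℚ)
          ≤ ∑ j ∈ range r, 1 := Finset.sum_le_sum fun j _ => (hterm _).2
        _ = r := by simp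
  rcases le_or_gt m α.length with hm | hm
  · have h0 : (0 : ℚ) ≤ ∑ i ∈ range m, (regEvent α π (1 + i) : ℚ) :=
      Finset.sum_nonneg fun j _ => (hterm _).1
    have h1 : (∑ i ∈ range m, (regEvent α π (1 + i) : ℚ)) ≤ m := by
      calc ∑ i ∈ range m, (regEvent α π (1 + i) : ℚ)
          ≤ ∑ i ∈ range m, 1 := Finset.sum_le_sum fun j _ => (hterm _).2
        _ = m := by simp
    have hmQ : (m : ℚ) ≤ α.length := by exact_mod_cast hm
    have hmp0 : (0 : ℚ) ≤ m * p := by positivity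
    have hmp1 : (m : ℚ) * p ≤ m := by simpa using mul_le_of_le_one_right (Nat.cast_nonneg m) hp1
    rw [abs_le]
    constructor <;> nlinarith
  · set q := (m - α.length) / π.length with hq
    set r := (m - α.length) % π.length with hr
    have hrL : r < π.length := Nat.mod_lt _ hL
    have hmsplit : m = (α.length + q * π.length) + r := by
      have h := Nat.div_add_mod (m - α.length) π.length
      rw [hq, hr, Nat.mul_comm]
      omega
    rw [hmsplit, Finset.sum_range_add, block_sum]
    set Δ := ∑ j ∈ range r, (regEvent α π (1 + (α.length + q * π.length + j)) : ℚ) with hΔ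
    obtain ⟨hΔ0, hΔ1⟩ := hsum_bd (α.length + q * π.length) r
    rw [← hΔ] at hΔ0 hΔ1
    have hLp : (π.length : ℚ) * p = π.sum := by
      rw [hp, mul_comm, div_mul_cancel₀ _ (ne_of_gt hLQ)]
    have hcast : ((α.length + q * π.length + r : ℕ) : ℚ)
        = (α.length : ℚ) + q * π.length + r := by push_cast; ring
    rw [hcast]
    have hrQ : (r : ℚ) ≤ π.length := by exact_mod_cast hrL.le
    have hα0 : (0 : ℚ) ≤ α.sum := by positivity
    have hαp : (0:ℚ) ≤ (α.length : ℚ) * p := by positivity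
    have hαp1 : (α.length : ℚ) * p ≤ α.length := by
      simpa using mul_le_of_le_one_right (Nat.cast_nonneg α.length) hp1
    have hrp : (0:ℚ) ≤ (r : ℚ) * p := by positivity
    have hrp1 : (r : ℚ) * p ≤ r := by simpa using mul_le_of_le_one_right (Nat.cast_nonneg r) hp1
    rw [abs_le]
    constructor <;> nlinarith

lemma icc_range' (n : ℕ) (f : ℕ → ℚ) : ∑ i ∈ Finset.Icc 1 n, f i = ∑ i ∈ range n, f (1+i) := by
  rw [← Finset.Ico_add_one_right_eq_Icc, Finset.sum_Ico_eq_sum_range]; simp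

theorem stmt11 (α π : List ℕ) (hαbits : ∀ x ∈ α, x ≤ 1) (hπbits : ∀ x ∈ π, x ≤ 1)
    (hπ : π ≠ []) :
    ∃ γ : ℕ → ℕ, IsActual (regEvent α π) γ ∧
      Filter.Tendsto (fun n => (freq (regEvent α π) (γ n) : ℝ)) Filter.atTop
        (nhds ((π.sum : ℝ) / (π.length : ℝ))) := by
  set e := regEvent α π with he
  set p : ℚ := (π.sum : ℚ) / π.length with hp
  set C : ℚ := (α.length : ℚ) + π.length with hC
  set K : ℕ := α.length + π.length + 1 with hK
  have hL : 0 < π.length := List.length_pos_iff.mpr hπ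
  have hC0 : 0 ≤ C := by positivity
  have hCK : C + 1 = (K : ℚ) := by rw [hC, hK]; push_cast; ring
  have hK1 : 1 ≤ K := by omega
  -- frequency bound
  have hfb : ∀ m : ℕ, 1 ≤ m → |freq e m - p| ≤ C / m := by
    intro m hm
    have hmQ : (0:ℚ) < m := by exact_mod_cast hm
    have h := S_bound α π hαbits hπbits hπ m
    rw [freq, icc_range']
    have heq : (∑ i ∈ range m, (e (1+i):ℚ))/m - p
        = ((∑ i ∈ range m, (e (1+i):ℚ)) - m*p)/m := by field_simp
    rw [heq, abs_div, abs_of_pos hmQ]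
    exact div_le_div_of_nonneg_right h hmQ.le
  -- key bound for γ
  have hmain : ∀ n, 1 ≤ n → ∀ i : ℕ, |freq e (2*K*n + i) - p| ≤ 1/(2*(n:ℚ)) := by
    intro n hn i
    have hm1 : 1 ≤ 2*K*n + i := by
      have hpos : 0 < 2*K*n := by
        have h0 : 0 < K := hK1
        positivity
      omega
    have h := hfb (2*K*n + i) hm1
    refine h.trans ?_
    have hnQ : (0:ℚ) < n := by exact_mod_cast hn
    have hmQ : (0:ℚ) < ((2*K*n + i : ℕ) : ℚ) := by exact_mod_cast hm1
    rw [div_le_div_iff₀ hmQ (by positivity)]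
    have hge : ((2*K*n + i : ℕ) : ℚ) ≥ 2*(K:ℚ)*n := by
      push_cast; nlinarith [Nat.cast_nonneg (α := ℚ) i]
    nlinarith [mul_nonneg hC0 hnQ.le]
  refine ⟨fun n => 2*K*n, ⟨?_, ?_, ?_⟩, ?_⟩
  · intro n hn
    simpa using Nat.mul_le_mul (show 1 ≤ 2*K by omega) hn
  · intro m n _ hmn
    exact mul_lt_mul_of_pos_left hmn (by omega)
  · intro n hn i j
    have h1 := hmain n hn i
    have h2 := hmain n hn j
    have hnQ : (0:ℚ) < n := by exact_mod_cast hn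
    have habs : |freq e (2*K*n + i) - freq e (2*K*n + j)|
        ≤ |freq e (2*K*n + i) - p| + |p - freq e (2*K*n + j)| := abs_sub_le _ _ _
    rw [abs_sub_comm p] at habs
    have h3 : (1:ℚ)/(2*(n:ℚ)) = (1/(n:ℚ))/2 := by rw [div_div]; ring_nf
    linarith
  · have hpR : (π.sum : ℝ) / (π.length : ℝ) = ((p : ℚ) : ℝ) := by rw [hp, Rat.cast_div, Rat.cast_natCast, Rat.cast_natCast]
    rw [hpR]
    rw [← tendsto_sub_nhds_zero_iff]
    refine squeeze_zero_norm' (a := fun n : ℕ => 1/(n:ℝ)) ?_ tendsto_one_div_atTop_nhds_zero_nat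
    · filter_upwards [Filter.eventually_ge_atTop 1] with n hn
      have h := hmain n hn 0
      have hnQ : (0:ℚ) < n := by exact_mod_cast hn
      have h' : |freq e (2*K*n + 0) - p| ≤ 1/(n:ℚ) := by
        refine h.trans ?_
        rw [div_le_div_iff₀ (by positivity) hnQ]
        nlinarith
      have := (Rat.cast_le (K := ℝ)).mpr h'
      rw [Rat.cast_abs] at this
      push_cast at this ⊢
      simpa [Real.norm_eq_abs] using this
end

section
/- Let e be the potential event consisting of consecutive blocks, for n = 0, 1, 2, …, of 2ⁿ ones followed by 2ⁿ zeros; explicitly, e(i) = 1 if and only if there exists n ≥ 0 with 2^{n+1} − 1 ≤ i ≤ 2^{n+1} − 2 + 2ⁿ. Then there is no strictly increasing γ : ℕ⁺ → ℕ⁺ such that (e, γ) is an actual event; equivalently, the frequency sequence Φ(e) does not converge. -/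
section aux
variable {e : ℕ → ℕ} (he : IsPotential e)
    (hdef : ∀ i, 1 ≤ i →
      (e i = 1 ↔ ∃ n : ℕ, 2 ^ (n + 1) - 1 ≤ i ∧ i ≤ 2 ^ (n + 1) - 2 + 2 ^ n))

include hdef in
lemma e_one (k i : ℕ) (h1 : 2 ^ (k+1) - 1 ≤ i) (h2 : i ≤ 2 ^ (k+1) - 2 + 2 ^ k) :
    e i = 1 := by
  have hp : 1 ≤ 2 ^ (k+1) := Nat.one_le_two_pow
  exact (hdef i (by omega)).mpr ⟨k, h1, h2⟩

include he hdef in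
lemma e_zero (k i : ℕ) (h1 : 3 * 2 ^ k - 1 ≤ i) (h2 : i ≤ 2 ^ (k+2) - 2) :
    e i = 0 := by
  have hp : 1 ≤ 2 ^ k := Nat.one_le_two_pow
  have hi1 : 1 ≤ i := by omega
  have hle := he i hi1
  by_contra h
  have : e i = 1 := by omega
  obtain ⟨n, hn1, hn2⟩ := (hdef i hi1).mp this
  rcases le_or_gt n k with h' | h'
  · have : 2 ^ n ≤ 2 ^ k := Nat.pow_le_pow_right (by norm_num) h'
    have : 2 ^ (n+1) ≤ 2 ^ (k+1) := Nat.pow_le_pow_right (by norm_num) (by omega)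
    have hk1 : (2:ℕ) ^ (k+1) = 2 * 2 ^ k := by ring
    omega
  · have : 2 ^ (k+2) ≤ 2 ^ (n+1) := Nat.pow_le_pow_right (by norm_num) (by omega)
    omega

include he hdef in
lemma sumA : ∀ k : ℕ, ∑ i ∈ Finset.Ioc 0 (3 * 2 ^ k - 2), e i = 2 ^ (k+1) - 1 := by
  intro k
  induction k with
  | zero =>
      norm_num
      exact e_one hdef 0 1 (by norm_num) (by norm_num)
  | succ k ih =>
      have hp : 1 ≤ 2 ^ k := Nat.one_le_two_pow
      -- split: Ioc 0 (3*2^k-2) (value 2^{k+1}-1), zeros Ioc (3*2^k-2) (2^{k+2}-2),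
      -- ones Ioc (2^{k+2}-2) (3*2^{k+1}-2)
      have h1 : (3 * 2 ^ k - 2 : ℕ) ≤ 2 ^ (k+2) - 2 := by
        have : (2:ℕ) ^ (k+2) = 4 * 2 ^ k := by ring
        omega
      have h2 : (2 ^ (k+2) - 2 : ℕ) ≤ 3 * 2 ^ (k+1) - 2 := by
        have : (2:ℕ) ^ (k+2) = 4 * 2 ^ k := by ring
        have : (2:ℕ) ^ (k+1) = 2 * 2 ^ k := by ring
        omega
      have s1 := Finset.sum_Ioc_consecutive e (Nat.zero_le _) h1
      have s2 := Finset.sum_Ioc_consecutive e (Nat.zero_le _) h2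
      have hz : ∑ i ∈ Finset.Ioc (3 * 2 ^ k - 2) (2 ^ (k+2) - 2), e i = 0 := by
        apply Finset.sum_eq_zero
        intro i hi
        simp only [Finset.mem_Ioc] at hi
        exact e_zero he hdef k i (by omega) hi.2
      have ho : ∑ i ∈ Finset.Ioc (2 ^ (k+2) - 2) (3 * 2 ^ (k+1) - 2), e i
          = 3 * 2 ^ (k+1) - 2 - (2 ^ (k+2) - 2) := by
        rw [Finset.sum_congr rfl (fun i hi => ?_), Finset.sum_const, Nat.card_Ioc, smul_eq_mul,
          mul_one]
        simp only [Finset.mem_Ioc] at hi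
        have e1 : (2:ℕ) ^ (k+2) = 2 ^ ((k+1)+1) := by ring
        have e2 : (2:ℕ) ^ (k+2) = 2 * 2 ^ (k+1) := by ring
        have hq : 1 ≤ (2:ℕ) ^ (k+1) := Nat.one_le_two_pow
        exact e_one hdef (k+1) i (by omega) (by omega)
      have e1 : (2:ℕ) ^ (k+2) = 4 * 2 ^ k := by ring
      have e2 : (2:ℕ) ^ (k+1) = 2 * 2 ^ k := by ring
      omega

include he hdef in
lemma sumB (k : ℕ) : ∑ i ∈ Finset.Ioc 0 (2 ^ (k+2) - 2), e i = 2 ^ (k+1) - 1 := by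
  have hp : 1 ≤ 2 ^ k := Nat.one_le_two_pow
  have h1 : (3 * 2 ^ k - 2 : ℕ) ≤ 2 ^ (k+2) - 2 := by
    have : (2:ℕ) ^ (k+2) = 4 * 2 ^ k := by ring
    omega
  have s1 := Finset.sum_Ioc_consecutive e (Nat.zero_le (3 * 2 ^ k - 2)) h1
  have hz : ∑ i ∈ Finset.Ioc (3 * 2 ^ k - 2) (2 ^ (k+2) - 2), e i = 0 := by
    apply Finset.sum_eq_zero
    intro i hi
    simp only [Finset.mem_Ioc] at hi
    exact e_zero he hdef k i (by omega) hi.2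
  have := sumA he hdef k
  omega

end aux

theorem stmt15 (e : ℕ → ℕ) (he : IsPotential e)
    (hdef : ∀ i, 1 ≤ i →
      (e i = 1 ↔ ∃ n : ℕ, 2 ^ (n + 1) - 1 ≤ i ∧ i ≤ 2 ^ (n + 1) - 2 + 2 ^ n)) :
    ¬ ∃ γ : ℕ → ℕ, IsActual e γ := by
  rintro ⟨γ, h1, h2, h3⟩
  set k := γ 7 with hk
  have hp : 1 ≤ 2 ^ k := Nat.one_le_two_pow
  have hkp : k < 2 ^ k := Nat.lt_two_pow_self
  set A := 3 * 2 ^ k - 2 with hA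
  set B := 2 ^ (k + 2) - 2 with hB
  have e4 : (2:ℕ) ^ (k+2) = 4 * 2 ^ k := by ring
  have hγA : γ 7 ≤ A := by omega
  have hγB : γ 7 ≤ B := by omega
  have hicc : ∀ n : ℕ, Finset.Icc 1 n = Finset.Ioc 0 n := by
    intro n; rw [← Finset.Icc_add_one_left_eq_Ioc, zero_add]
  have hfA : freq e A = ((2 ^ (k+1) - 1 : ℕ) : ℚ) / ((A : ℕ) : ℚ) := by
    unfold freq
    rw [hicc, ← Nat.cast_sum, sumA he hdef k]
  have hfB : freq e B = ((2 ^ (k+1) - 1 : ℕ) : ℚ) / ((B : ℕ) : ℚ) := by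
    unfold freq
    rw [hicc, ← Nat.cast_sum, sumB he hdef k]
  have hq1 : (1:ℚ) ≤ 2 ^ k := one_le_pow₀ (by norm_num)
  have c1 : ((2 ^ (k+1) - 1 : ℕ) : ℚ) = 2 * (2:ℚ) ^ k - 1 := by
    have : (2:ℕ) ^ (k+1) = 2 * 2 ^ k := by ring
    rw [this, Nat.cast_sub (by omega)]
    push_cast; ring
  have c2 : ((A : ℕ) : ℚ) = 3 * (2:ℚ) ^ k - 2 := by
    rw [hA, Nat.cast_sub (by omega)]
    push_cast; ring
  have c3 : ((B : ℕ) : ℚ) = 4 * (2:ℚ) ^ k - 2 := by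
    rw [hB, e4, Nat.cast_sub (by omega)]
    push_cast; ring
  have key := h3 7 (by norm_num) (A - γ 7) (B - γ 7)
  rw [Nat.add_sub_cancel' hγA, Nat.add_sub_cancel' hγB, hfA, hfB, c1, c2, c3] at key
  have hd1 : (0:ℚ) < 3 * (2:ℚ) ^ k - 2 := by linarith
  have hd2 : (0:ℚ) < 4 * (2:ℚ) ^ k - 2 := by linarith
  have hgt : (2 * (2:ℚ) ^ k - 1) / (3 * (2:ℚ) ^ k - 2) - (2 * (2:ℚ) ^ k - 1) / (4 * (2:ℚ) ^ k - 2) > 1 / 7 := by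
    rw [div_sub_div _ _ (ne_of_gt hd1) (ne_of_gt hd2), gt_iff_lt,
      div_lt_div_iff₀ (by norm_num) (by positivity)]
    nlinarith
  have habs := le_abs_self ((2 * (2:ℚ) ^ k - 1) / (3 * (2:ℚ) ^ k - 2) - (2 * (2:ℚ) ^ k - 1) / (4 * (2:ℚ) ^ k - 2))
  norm_num at key
  linarith
end
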